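/- Let N > 16 and S_N⁺, S_N⁻ as above, and define p(ξ, κ) = ((ξ₁ + ξ₂ − κ₁ − κ₂)/|ξ − κ|)·((κ₁ + κ₂)/|κ|). If ξ − κ ∈ S_N⁺ and κ ∈ S_N⁻, or ξ − κ ∈ S_N⁻ and κ ∈ S_N⁺, then −p(ξ, κ) ≥ 3/4. -/
import Mathlib

noncomputable def nrm2 (ξ : ℝ × ℝ) : ℝ := Real.sqrt (ξ.1 ^ 2 + ξ.2 ^ 2)

def SNplus (N : ℝ) : Set (ℝ × ℝ) :=
  {κ | N - 1/2 ≤ κ.1 ∧ κ.1 ≤ N + 1/2 ∧ |κ.2| ≤ 1}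

def SNminus (N : ℝ) : Set (ℝ × ℝ) :=
  {κ | -N - 1/2 ≤ κ.1 ∧ κ.1 ≤ -N + 1/2 ∧ |κ.2| ≤ 1}

noncomputable def pSym (ξ κ : ℝ × ℝ) : ℝ :=
  ((ξ.1 + ξ.2 - κ.1 - κ.2) / nrm2 (ξ - κ)) * ((κ.1 + κ.2) / nrm2 κ)

lemma key (N : ℝ) (hN : 16 < N) (a b : ℝ × ℝ)
    (ha : a ∈ SNplus N) (hb : b ∈ SNminus N) :
    3/4 ≤ -((a.1 + a.2) / nrm2 a * ((b.1 + b.2) / nrm2 b)) := by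
  obtain ⟨ha1, ha2, ha3⟩ := ha
  obtain ⟨hb1, hb2, hb3⟩ := hb
  rw [abs_le] at ha3 hb3
  have hA0 : (0:ℝ) < a.1 ^ 2 + a.2 ^ 2 := by nlinarith
  have hB0 : (0:ℝ) < b.1 ^ 2 + b.2 ^ 2 := by nlinarith
  have hA : 0 < nrm2 a := Real.sqrt_pos.mpr hA0
  have hB : 0 < nrm2 b := Real.sqrt_pos.mpr hB0
  have hA2 : nrm2 a ^ 2 = a.1 ^ 2 + a.2 ^ 2 := Real.sq_sqrt hA0.le
  have hB2 : nrm2 b ^ 2 = b.1 ^ 2 + b.2 ^ 2 := Real.sq_sqrt hB0.le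
  have hAle : nrm2 a ^ 2 ≤ 1 + (N + 1/2) ^ 2 := by nlinarith
  have hBle : nrm2 b ^ 2 ≤ 1 + (N + 1/2) ^ 2 := by nlinarith
  have hABle : nrm2 a * nrm2 b ≤ 1 + (N + 1/2) ^ 2 := by
    nlinarith [sq_nonneg (nrm2 a - nrm2 b)]
  rw [div_mul_div_comm, ← neg_div, le_div_iff₀ (by positivity)]
  nlinarith [mul_pos hA hB]

theorem stmt_9 (N : ℝ) (hN : 16 < N) (ξ κ : ℝ × ℝ)
    (h : (ξ - κ ∈ SNplus N ∧ κ ∈ SNminus N) ∨ (ξ - κ ∈ SNminus N ∧ κ ∈ SNplus N)) :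
    3/4 ≤ -pSym ξ κ := by
  have hps : pSym ξ κ = ((ξ - κ).1 + (ξ - κ).2) / nrm2 (ξ - κ) * ((κ.1 + κ.2) / nrm2 κ) := by
    unfold pSym; rw [Prod.fst_sub, Prod.snd_sub]; ring
  rcases h with ⟨h1, h2⟩ | ⟨h1, h2⟩
  · rw [hps]; exact key N hN (ξ - κ) κ h1 h2
  · have := key N hN κ (ξ - κ) h2 h1
    rw [hps]; linarith [this, mul_comm (((ξ - κ).1 + (ξ - κ).2) / nrm2 (ξ - κ)) ((κ.1 + κ.2) / nrm2 κ)]
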